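/- For every n ≥ 2, in the target group G_A(n) obtained by factoring the progenitor 2^{⋆n} : Sₙ (acting on 1-element subsets of {1,…,n}) by the relator (t_{1}·(1 2))³, the image of the control group Sym(Fin n) under the canonical quotient map has index at most n + 1 in G_A(n). (Equivalently, every element of G_A(n) can be written as π·w with π in the image of Sym(Fin n) and w a word of length at most one in the symmetric generators.) -/

import Mathlib

open Monoid Pointwise

/-- The type of `k`-element subsets of `Fin n`. -/
abbrev KSub (n k : ℕ) := {s : Finset (Fin n) // s.card = k}

/-- The free product of copies of `ℤ/2ℤ` indexed by the `k`-element subsets of `Fin n`. -/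
abbrev FP (n k : ℕ) := Monoid.CoprodI (fun _ : KSub n k => Multiplicative (ZMod 2))

/-- The symmetric generator `t_S`. -/
def tFP {n k : ℕ} (S : KSub n k) : FP n k :=
  Monoid.CoprodI.of (i := S) (Multiplicative.ofAdd (1 : ZMod 2))

/-- The action of a permutation of `Fin n` on the `k`-element subsets. -/
instance KSub.instMulAction (n k : ℕ) : MulAction (Equiv.Perm (Fin n)) (KSub n k) where
  smul σ S := ⟨σ • S.1, by rw [Finset.card_smul_finset]; exact S.2⟩
  one_smul S := Subtype.ext (one_smul _ S.1)
  mul_smul σ τ S := Subtype.ext (mul_smul σ τ S.1)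

/-- The endomorphism of the free product induced by a permutation of `Fin n`. -/
def fpHom {n k : ℕ} (σ : Equiv.Perm (Fin n)) : FP n k →* FP n k :=
  Monoid.CoprodI.lift (fun S => Monoid.CoprodI.of (M := fun _ : KSub n k => Multiplicative (ZMod 2)) (i := σ • S))

lemma fpHom_comp {n k : ℕ} (σ τ : Equiv.Perm (Fin n)) :
    (fpHom (n := n) (k := k) σ).comp (fpHom τ) = fpHom (σ * τ) := by
  apply Monoid.CoprodI.ext_hom
  intro S
  ext x
  simp [fpHom, Monoid.CoprodI.lift_of, mul_smul]

lemma fpHom_one {n k : ℕ} : fpHom (n := n) (k := k) 1 = MonoidHom.id _ := by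
  apply Monoid.CoprodI.ext_hom
  intro S
  ext x
  simp [fpHom, Monoid.CoprodI.lift_of]

/-- The action of `Sym(Fin n)` on the free product, permuting the free factors. -/
def fpAut (n k : ℕ) : Equiv.Perm (Fin n) →* MulAut (FP n k) :=
  MonoidHom.mk' (fun σ =>
    { toFun := fpHom σ
      invFun := fpHom σ⁻¹
      left_inv := fun x => by
        have h := fpHom_comp (n := n) (k := k) σ⁻¹ σ
        rw [inv_mul_cancel, fpHom_one] at h
        exact DFunLike.congr_fun h x
      right_inv := fun x => by
        have h := fpHom_comp (n := n) (k := k) σ σ⁻¹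
        rw [mul_inv_cancel, fpHom_one] at h
        exact DFunLike.congr_fun h x
      map_mul' := map_mul _ })
    (fun σ τ => by
      ext x
      exact (DFunLike.congr_fun (fpHom_comp (n := n) (k := k) σ τ) x).symm)

/-- The progenitor `2^{⋆C(n,k)} : Sₙ`. -/
abbrev Progenitor (n k : ℕ) := FP n k ⋊[fpAut n k] Equiv.Perm (Fin n)

/-- The target group: the quotient of the progenitor by the normal closure of the
single relator `(t_{S₀}·σ₀)³`. -/
abbrev TargetGroup (n k : ℕ) (S₀ : KSub n k) (σ₀ : Equiv.Perm (Fin n)) :=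
  Progenitor n k ⧸ Subgroup.normalClosure
    {(SemidirectProduct.inl (tFP S₀) * SemidirectProduct.inr σ₀) ^ 3}

/-- The image in the target group of the symmetric generator `t_S`. -/
def tbar {n k : ℕ} (S₀ : KSub n k) (σ₀ : Equiv.Perm (Fin n)) (S : KSub n k) :
    TargetGroup n k S₀ σ₀ :=
  QuotientGroup.mk (SemidirectProduct.inl (tFP S))

/-- The canonical map from the control group `Sₙ` to the target group. -/
def pbar {n k : ℕ} (S₀ : KSub n k) (σ₀ : Equiv.Perm (Fin n)) :
    Equiv.Perm (Fin n) →* TargetGroup n k S₀ σ₀ :=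
  (QuotientGroup.mk' _).comp (SemidirectProduct.inr)


namespace StmtAux

variable {n : ℕ}

/-- singleton as a 1-subset -/
def ot (a : Fin n) : KSub n 1 := ⟨{a}, Finset.card_singleton a⟩

lemma smul_ot (σ : Equiv.Perm (Fin n)) (a : Fin n) : σ • ot a = ot (σ a) := by
  apply Subtype.ext
  show σ • ({a} : Finset (Fin n)) = {σ a}
  rw [Finset.smul_finset_singleton, Equiv.Perm.smul_def]

lemma ot_surj (S : KSub n 1) : ∃ a, S = ot a := by
  obtain ⟨a, ha⟩ := Finset.card_eq_one.mp S.2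
  exact ⟨a, Subtype.ext ha⟩

lemma fpAut_tFP {k : ℕ} (σ : Equiv.Perm (Fin n)) (S : KSub n k) :
    fpAut n k σ (tFP S) = tFP (σ • S) := by
  show fpHom σ (tFP S) = tFP (σ • S)
  simp [fpHom, tFP, Monoid.CoprodI.lift_of]

lemma tFP_sq {k : ℕ} (S : KSub n k) : tFP S * tFP S = 1 := by
  rw [tFP, ← map_mul,
    show (Multiplicative.ofAdd (1 : ZMod 2)) * (Multiplicative.ofAdd (1 : ZMod 2)) = 1 from by decide,
    map_one]

section Fixed

variable {u v : Fin n}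

local notation "tt" => fun a => tbar (ot u) (Equiv.swap u v) (ot a)
local notation "pp" => pbar (ot u) (Equiv.swap u v)

lemma comm_pt (σ : Equiv.Perm (Fin n)) (a : Fin n) :
    pp σ * tt a = tt (σ a) * pp σ := by
  have h : (SemidirectProduct.inr σ : Progenitor n 1) * SemidirectProduct.inl (tFP (ot a))
      = SemidirectProduct.inl (tFP (ot (σ a))) * SemidirectProduct.inr σ := by
    rw [← smul_ot, ← fpAut_tFP, SemidirectProduct.inl_aut, mul_assoc, mul_assoc, ← map_mul,
      inv_mul_cancel, map_one, mul_one]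
  show QuotientGroup.mk _ * QuotientGroup.mk _ = QuotientGroup.mk _ * QuotientGroup.mk _
  rw [← QuotientGroup.mk_mul, h, QuotientGroup.mk_mul]

lemma tt_sq (a : Fin n) : tt a * tt a = 1 := by
  show QuotientGroup.mk _ * QuotientGroup.mk _ = 1
  rw [← QuotientGroup.mk_mul, ← map_mul, tFP_sq, map_one, QuotientGroup.mk_one]

lemma pp_mul (σ τ : Equiv.Perm (Fin n)) : pp σ * pp τ = pp (σ * τ) := (map_mul _ _ _).symm

lemma rel3 : (tt u * pp (Equiv.swap u v)) ^ 3 = 1 := by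
  show ((QuotientGroup.mk' _) (SemidirectProduct.inl (tFP (ot u)) * SemidirectProduct.inr (Equiv.swap u v))) ^ 3 = 1
  rw [← map_pow]
  exact (QuotientGroup.eq_one_iff _).mpr (Subgroup.subset_normalClosure rfl)

lemma pp_swap_sq : pp (Equiv.swap u v) * pp (Equiv.swap u v) = 1 := by
  rw [pp_mul, Equiv.swap_mul_self, map_one]

lemma key (huv : u ≠ v) : tt u * tt v = tt v * pp (Equiv.swap u v) := by
  set s := pp (Equiv.swap u v) with hs
  have h1 : s * tt u = tt v * s := by
    have h := comm_pt (u := u) (v := v) (Equiv.swap u v) u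
    rwa [Equiv.swap_apply_left] at h
  have h4 : s * s = 1 := pp_swap_sq
  have e : ((tt u * s) * (tt u * s)) * (tt u * s) = 1 := by
    have h := rel3 (u := u) (v := v)
    rwa [pow_succ, pow_two] at h
  have e1 : (tt u * s) * (tt u * s) = tt u * tt v := by
    calc (tt u * s) * (tt u * s) = tt u * ((s * tt u) * s) := by group
      _ = tt u * ((tt v * s) * s) := by rw [h1]
      _ = tt u * tt v * (s * s) := by group
      _ = tt u * tt v := by rw [h4, mul_one]
  rw [e1] at e
  have h5 := eq_inv_of_mul_eq_one_left e
  rw [mul_inv_rev, inv_eq_of_mul_eq_one_left h4, inv_eq_of_mul_eq_one_left (tt_sq u)] at h5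
  exact h5.trans h1

lemma exists_perm (huv : u ≠ v) {a b : Fin n} (hab : a ≠ b) :
    ∃ π : Equiv.Perm (Fin n), π u = a ∧ π v = b := by
  set b' := Equiv.swap u a b with hb'
  have hb'u : b' ≠ u := by
    intro h
    have h2 := congrArg (Equiv.swap u a) h
    rw [hb', Equiv.swap_apply_self, Equiv.swap_apply_left] at h2
    exact hab h2.symm
  refine ⟨Equiv.swap u a * Equiv.swap v b', ?_, ?_⟩
  · show Equiv.swap u a (Equiv.swap v b' u) = a
    rw [Equiv.swap_apply_of_ne_of_ne huv (Ne.symm hb'u), Equiv.swap_apply_left]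
  · show Equiv.swap u a (Equiv.swap v b' v) = b
    rw [Equiv.swap_apply_left, hb', Equiv.swap_apply_self]

lemma keyAB (huv : u ≠ v) {a b : Fin n} (hab : a ≠ b) :
    ∃ τ, tt a * tt b = tt b * pp τ := by
  obtain ⟨π, hπu, hπv⟩ := exists_perm huv hab
  refine ⟨π * Equiv.swap u v * π⁻¹, ?_⟩
  calc tt a * tt b
      = tt a * tt b * (pp π * (pp π)⁻¹) := by rw [mul_inv_cancel, mul_one]
    _ = tt a * (tt (π v) * pp π) * (pp π)⁻¹ := by rw [hπv]; group
    _ = tt a * (pp π * tt v) * (pp π)⁻¹ := by rw [← comm_pt π v]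
    _ = (tt (π u) * pp π) * tt v * (pp π)⁻¹ := by rw [hπu]; group
    _ = (pp π * tt u) * tt v * (pp π)⁻¹ := by rw [← comm_pt π u]
    _ = pp π * (tt u * tt v) * (pp π)⁻¹ := by group
    _ = pp π * (tt v * pp (Equiv.swap u v)) * (pp π)⁻¹ := by rw [key huv]
    _ = (pp π * tt v) * (pp (Equiv.swap u v) * (pp π)⁻¹) := by group
    _ = (tt (π v) * pp π) * (pp (Equiv.swap u v) * (pp π)⁻¹) := by rw [comm_pt π v]
    _ = tt b * (pp π * pp (Equiv.swap u v) * (pp π)⁻¹) := by rw [hπv]; group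
    _ = tt b * pp (π * Equiv.swap u v * π⁻¹) := by rw [map_mul, map_mul, map_inv]

lemma main_decomp (huv : u ≠ v) (g : TargetGroup n 1 (ot u) (Equiv.swap u v)) :
    (∃ τ, g = pp τ) ∨ ∃ a τ, g = tt a * pp τ := by
  have hmul : ∀ x y : TargetGroup n 1 (ot u) (Equiv.swap u v),
      ((∃ τ, x = pp τ) ∨ ∃ a τ, x = tt a * pp τ) →
      ((∃ τ, y = pp τ) ∨ ∃ a τ, y = tt a * pp τ) →
      ((∃ τ, x * y = pp τ) ∨ ∃ a τ, x * y = tt a * pp τ) := by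
    rintro x y (⟨τ, rfl⟩ | ⟨a, τ, rfl⟩) (⟨τ', rfl⟩ | ⟨b, τ', rfl⟩)
    · exact Or.inl ⟨τ * τ', (map_mul _ _ _).symm⟩
    · refine Or.inr ⟨τ b, τ * τ', ?_⟩
      rw [← mul_assoc, comm_pt, map_mul]
      group
    · refine Or.inr ⟨a, τ * τ', ?_⟩
      rw [map_mul]
      group
    · have h : tt a * pp τ * (tt b * pp τ') = (tt a * tt (τ b)) * pp (τ * τ') := by
        rw [map_mul]
        calc tt a * pp τ * (tt b * pp τ') = tt a * (pp τ * tt b) * pp τ' := by group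
          _ = tt a * (tt (τ b) * pp τ) * pp τ' := by rw [comm_pt]
          _ = (tt a * tt (τ b)) * (pp τ * pp τ') := by group
      rw [h]
      by_cases hab : a = τ b
      · refine Or.inl ⟨τ * τ', ?_⟩
        rw [hab, tt_sq, one_mul]
      · obtain ⟨ρ, hρ⟩ := keyAB huv hab
        refine Or.inr ⟨τ b, ρ * (τ * τ'), ?_⟩
        rw [hρ]
        simp only [map_mul]
        group
  induction g using QuotientGroup.induction_on with
  | H p =>
    rw [← SemidirectProduct.inl_left_mul_inr_right p, QuotientGroup.mk_mul]
    refine hmul _ _ ?_ (Or.inl ⟨p.right, rfl⟩)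
    induction p.left using Monoid.CoprodI.induction_on with
    | one =>
      exact Or.inl ⟨1, by rw [map_one, QuotientGroup.mk_one, map_one]⟩
    | of i m =>
      obtain ⟨a, rfl⟩ := ot_surj i
      rcases (by decide : ∀ x : Multiplicative (ZMod 2), x = 1 ∨ x = Multiplicative.ofAdd 1) m
        with hm | hm
      · refine Or.inl ⟨1, ?_⟩
        rw [hm,
          show (Monoid.CoprodI.of (M := fun _ : KSub n 1 => Multiplicative (ZMod 2)) (i := ot a)
            (1 : Multiplicative (ZMod 2))) = 1 from map_one _,
          show (SemidirectProduct.inl (1 : FP n 1) : Progenitor n 1) = 1 from map_one _,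
          QuotientGroup.mk_one,
          show pbar (ot u) (Equiv.swap u v) 1 = 1 from map_one _]
      · refine Or.inr ⟨a, 1, ?_⟩
        rw [hm, show pbar (ot u) (Equiv.swap u v) 1 = 1 from map_one _, mul_one]
        rfl
    | mul x y hx hy =>
      rw [map_mul, QuotientGroup.mk_mul]
      exact hmul _ _ hx hy

end Fixed

end StmtAux

/-- For every `n ≥ 2`, in the target group `G_A(n)`, the image of the control
group `Sym(Fin n)` under the canonical quotient map has (finite) index at most `n + 1`. -/
theorem targetGroup_A_controlGroup_index_le (n : ℕ) (hn : 2 ≤ n) :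
    0 < (pbar (n := n) (k := 1) ⟨{⟨0, by omega⟩}, Finset.card_singleton _⟩
          (Equiv.swap ⟨0, by omega⟩ ⟨1, by omega⟩)).range.index ∧
      (pbar (n := n) (k := 1) ⟨{⟨0, by omega⟩}, Finset.card_singleton _⟩
          (Equiv.swap ⟨0, by omega⟩ ⟨1, by omega⟩)).range.index ≤ n + 1 := by
  have h0 : 0 < n := by omega
  have h1 : 1 < n := by omega
  set u : Fin n := ⟨0, h0⟩ with hu
  set v : Fin n := ⟨1, h1⟩ with hv
  have huv : u ≠ v := by
    simp [hu, hv, Fin.ext_iff]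
  set H : Subgroup (TargetGroup n 1 (StmtAux.ot u) (Equiv.swap u v)) :=
    (pbar (StmtAux.ot u) (Equiv.swap u v)).range with hH
  let f : Option (Fin n) → (TargetGroup n 1 (StmtAux.ot u) (Equiv.swap u v)) ⧸ H :=
    fun o => QuotientGroup.mk (o.elim 1 (fun a => tbar (StmtAux.ot u) (Equiv.swap u v) (StmtAux.ot a)))
  have hf : Function.Surjective f := by
    intro q
    induction q using QuotientGroup.induction_on with
    | H g =>
      rcases StmtAux.main_decomp huv g with ⟨τ, rfl⟩ | ⟨a, τ, rfl⟩
      · refine ⟨none, ?_⟩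
        show QuotientGroup.mk 1 = _
        rw [show pbar (StmtAux.ot u) (Equiv.swap u v) τ
            = 1 * pbar (StmtAux.ot u) (Equiv.swap u v) τ from (one_mul _).symm,
          QuotientGroup.mk_mul_of_mem 1 (MonoidHom.mem_range.mpr ⟨τ, rfl⟩)]
      · exact ⟨some a, (QuotientGroup.mk_mul_of_mem _ (MonoidHom.mem_range.mpr ⟨τ, rfl⟩)).symm⟩
  have hfin : Finite ((TargetGroup n 1 (StmtAux.ot u) (Equiv.swap u v)) ⧸ H) :=
    Finite.of_surjective f hf
  have hidx : H.index = Nat.card ((TargetGroup n 1 (StmtAux.ot u) (Equiv.swap u v)) ⧸ H) := rfl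
  constructor
  · show 0 < H.index
    rw [hidx]
    exact Nat.card_pos
  · show H.index ≤ n + 1
    rw [hidx]
    calc Nat.card ((TargetGroup n 1 (StmtAux.ot u) (Equiv.swap u v)) ⧸ H)
        ≤ Nat.card (Option (Fin n)) := Nat.card_le_card_of_surjective f hf
      _ = n + 1 := by simp
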